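/- Let $G$ be a group and $(\rho_\ell : G \to G_\ell)_{\ell \in L}$ a family of surjective homomorphisms onto finite groups indexed by a set $L$. Suppose that for all distinct $\ell_1, \ell_2 \in L$ the groups $G_{\ell_1}$ and $G_{\ell_2}$ have no common finite simple quotient (up to isomorphism). Then for every finite subset $S \subseteq L$ the induced homomorphism $G \to \prod_{\ell \in S} G_\ell$ is surjective. -/

import Mathlib

/-- `S` is a finite simple quotient of `G`: `S` is simple and isomorphic to `G ⧸ N`
for some normal subgroup `N` of `G`. -/
def IsFiniteSimpleQuotient (G : Type*) [Group G] (S : Type*) [Group S] : Prop :=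
  IsSimpleGroup S ∧ ∃ (N : Subgroup G) (hN : N.Normal), Nonempty ((G ⧸ N) ≃* S)

lemma isFiniteSimpleQuotient_of_surjective {X T : Type*} [Group X] [Group T]
    (f : X →* T) (hf : Function.Surjective f) (hT : IsSimpleGroup T) :
    IsFiniteSimpleQuotient X T :=
  ⟨hT, f.ker, inferInstance, ⟨QuotientGroup.quotientKerEquivOfSurjective f hf⟩⟩

/-- Every finite nontrivial group has a simple quotient. -/
lemma exists_simple_quotient (Q : Type*) [Group Q] [Finite Q] [Nontrivial Q] :
    ∃ (N : Subgroup Q) (_ : N.Normal), IsSimpleGroup (Q ⧸ N) := by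
  classical
  set s : Set (Subgroup Q) := {N | N.Normal ∧ N ≠ ⊤} with hs_def
  have hsf : s.Finite := Set.toFinite s
  have hne : s.Nonempty := ⟨⊥, inferInstance, bot_ne_top⟩
  obtain ⟨N, hNs, hmax⟩ := hsf.exists_maximal hne
  obtain ⟨hNnorm, hNne⟩ := hNs
  haveI := hNnorm
  refine ⟨N, hNnorm, ?_⟩
  have hnt : Nontrivial (Q ⧸ N) := by
    obtain ⟨b, hb⟩ : ∃ b, b ∉ N := by
      by_contra h
      push_neg at h
      exact hNne ((Subgroup.eq_top_iff' _).mpr h)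
    exact ⟨QuotientGroup.mk b, 1, fun h => hb ((QuotientGroup.eq_one_iff b).mp h)⟩
  refine ⟨fun K hK => ?_⟩
  by_cases h : K = ⊤
  · right; exact h
  left
  have hsurj := QuotientGroup.mk'_surjective N
  have hKeq : (K.comap (QuotientGroup.mk' N)).map (QuotientGroup.mk' N) = K :=
    Subgroup.map_comap_eq_self_of_surjective hsurj K
  have hmem : K.comap (QuotientGroup.mk' N) ∈ s := by
    refine ⟨hK.comap _, fun he => h ?_⟩
    rw [← hKeq, he]
    exact Subgroup.map_top_of_surjective _ hsurj
  have hle : N ≤ K.comap (QuotientGroup.mk' N) := by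
    intro x hx
    show QuotientGroup.mk' N x ∈ K
    have : QuotientGroup.mk' N x = 1 := (QuotientGroup.eq_one_iff x).mpr hx
    rw [this]; exact K.one_mem
  have heq : N = K.comap (QuotientGroup.mk' N) := le_antisymm hle (hmax hmem hle)
  rw [← hKeq, ← heq]
  rw [Subgroup.map_eq_bot_iff, QuotientGroup.ker_mk']

/-- A simple quotient of a finite product of groups is a quotient of one of the factors. -/
lemma pi_simple_quotient {ι : Type*} [Fintype ι] [DecidableEq ι] {M : ι → Type*}
    [∀ i, Group (M i)] {T : Type*} [Group T] (f : (∀ i, M i) →* T)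
    (hf : Function.Surjective f) (hT : IsSimpleGroup T) :
    ∃ i, Function.Surjective (f.comp (MonoidHom.mulSingle M i)) := by
  by_contra h
  push_neg at h
  have hconj : ∀ (i : ι) (x : M i) (y : ∀ i, M i),
      y * Pi.mulSingle i x * y⁻¹ = Pi.mulSingle i (y i * x * (y i)⁻¹) := by
    intro i x y
    funext j
    by_cases hj : j = i
    · subst hj; simp
    · simp [Pi.mulSingle_eq_of_ne hj]
  have himg : ∀ i, (f.comp (MonoidHom.mulSingle M i)).range = ⊥ := by
    intro i
    have hnorm : ((f.comp (MonoidHom.mulSingle M i)).range).Normal := by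
      constructor
      rintro _ ⟨x, rfl⟩ t
      obtain ⟨y, rfl⟩ := hf t
      refine ⟨y i * x * (y i)⁻¹, ?_⟩
      simp only [MonoidHom.comp_apply, MonoidHom.mulSingle_apply]
      rw [← hconj, map_mul, map_mul, map_inv]
    rcases hT.eq_bot_or_eq_top_of_normal _ hnorm with h' | h'
    · exact h'
    · exact absurd (MonoidHom.range_eq_top.mp h') (h i)
  have hone : ∀ (i : ι) (x : M i), f (Pi.mulSingle i x) = 1 := by
    intro i x
    have : f (Pi.mulSingle i x) ∈ (f.comp (MonoidHom.mulSingle M i)).range := ⟨x, rfl⟩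
    rw [himg i] at this
    exact this
  have hftriv : ∀ x, f x = 1 := by
    intro x
    exact DFunLike.congr_fun (MonoidHom.pi_ext (f := f) (g := 1) fun i y => hone i y) x
  obtain ⟨t, ht⟩ := exists_ne (1 : T)
  obtain ⟨x, rfl⟩ := hf t
  exact ht (hftriv x)

/-- If `G` surjects onto `A` and onto a finite `B` but not onto `A × B`, then `A` and `B` have
a common simple quotient. -/
lemma exists_common_quotient {G A : Type*} {B : Type} [Group G] [Group A] [Group B] [Finite B]
    (φ : G →* A) (ψ : G →* B) (hφ : Function.Surjective φ) (hψ : Function.Surjective ψ)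
    (hns : ¬ Function.Surjective (fun g => ((φ g, ψ g) : A × B))) :
    ∃ (T : Type) (_ : Group T), IsSimpleGroup T ∧
      (∃ f : A →* T, Function.Surjective f) ∧ (∃ f : B →* T, Function.Surjective f) := by
  classical
  set χ : G →* A × B := φ.prod ψ with hχ
  set H : Subgroup (A × B) := χ.range with hH
  set N : Subgroup B := H.comap (MonoidHom.inr A B) with hN
  have hNnorm : N.Normal := by
    constructor
    intro n hn b
    obtain ⟨g, hg⟩ := hψ b
    have hgH : (φ g, b) ∈ H := ⟨g, by simp [hχ, MonoidHom.prod_apply, hg]⟩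
    have hnH : ((1 : A), n) ∈ H := hn
    have : ((φ g, b) * (1, n) * (φ g, b)⁻¹ : A × B) ∈ H :=
      H.mul_mem (H.mul_mem hgH hnH) (H.inv_mem hgH)
    have heq : ((φ g, b) * (1, n) * (φ g, b)⁻¹ : A × B) = (1, b * n * b⁻¹) := by
      ext <;> simp
    rw [heq] at this
    exact this
  have hNne : N ≠ ⊤ := by
    intro he
    apply hns
    rintro ⟨x, y⟩
    obtain ⟨g, hg⟩ := hφ x
    have h1 : ((1 : A), (ψ g)⁻¹ * y) ∈ H := by
      rw [hH] at *
      have : ((ψ g)⁻¹ * y) ∈ N := he ▸ Subgroup.mem_top _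
      exact this
    have h2 : (x, ψ g) ∈ H := ⟨g, by simp [hχ, MonoidHom.prod_apply, hg]⟩
    have h3 : ((x, ψ g) * (1, (ψ g)⁻¹ * y) : A × B) ∈ H := H.mul_mem h2 h1
    have heq : ((x, ψ g) * (1, (ψ g)⁻¹ * y) : A × B) = (x, y) := by
      ext <;> simp
    rw [heq] at h3
    obtain ⟨g', hg'⟩ := h3
    exact ⟨g', hg'⟩
  haveI := hNnorm
  haveI : Nontrivial (B ⧸ N) := by
    obtain ⟨b, hb⟩ : ∃ b, b ∉ N := by
      by_contra h
      push_neg at h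
      exact hNne ((Subgroup.eq_top_iff' _).mpr h)
    exact ⟨QuotientGroup.mk b, 1, fun h => hb ((QuotientGroup.eq_one_iff b).mp h)⟩
  obtain ⟨M, hMnorm, hMsimple⟩ := exists_simple_quotient (B ⧸ N)
  haveI := hMnorm
  set T := (B ⧸ N) ⧸ M with hT
  set fB : B →* T := (QuotientGroup.mk' M).comp (QuotientGroup.mk' N) with hfB
  have hfBsurj : Function.Surjective fB :=
    (QuotientGroup.mk'_surjective M).comp (QuotientGroup.mk'_surjective N)
  set θ : G →* T := fB.comp ψ with hθ
  have hθsurj : Function.Surjective θ := hfBsurj.comp hψ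
  have hker : ∀ g, φ g = 1 → θ g = 1 := by
    intro g hg
    have hmem : ψ g ∈ N := by
      show ((1 : A), ψ g) ∈ H
      exact ⟨g, by simp [hχ, MonoidHom.prod_apply, hg]⟩
    have : QuotientGroup.mk' N (ψ g) = 1 := (QuotientGroup.eq_one_iff _).mpr hmem
    simp [hθ, hfB, MonoidHom.comp_apply, this]
  -- build A →* T
  have hkerle : φ.ker ≤ θ.ker := fun g hg => hker g hg
  set e : G ⧸ φ.ker ≃* A := QuotientGroup.quotientKerEquivOfSurjective φ hφ with he
  set lift : G ⧸ φ.ker →* T := QuotientGroup.lift φ.ker θ hkerle with hlift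
  have hliftsurj : Function.Surjective lift := by
    intro t
    obtain ⟨g, hg⟩ := hθsurj t
    exact ⟨QuotientGroup.mk g, hg⟩
  refine ⟨T, inferInstance, hMsimple, ⟨lift.comp e.symm.toMonoidHom, ?_⟩, ⟨fB, hfBsurj⟩⟩
  exact hliftsurj.comp e.symm.surjective

theorem stmt_13 (G : Type*) [Group G] (L : Type*) (Gf : L → Type)
    [∀ l, Group (Gf l)] [∀ l, Finite (Gf l)]
    (ρ : ∀ l, G →* Gf l) (hsurj : ∀ l, Function.Surjective (ρ l))
    (hind : ∀ l₁ l₂ : L, l₁ ≠ l₂ → ∀ (S : Type) [Group S],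
      IsFiniteSimpleQuotient (Gf l₁) S → IsFiniteSimpleQuotient (Gf l₂) S → False) :
    ∀ S : Finset L, Function.Surjective (fun (g : G) (l : S) => ρ l.1 g) := by
  classical
  intro S
  induction S using Finset.induction_on with
  | empty =>
    intro t
    exact ⟨1, funext fun l => (Finset.notMem_empty l.1 l.2).elim⟩
  | @insert a S ha IH =>
    set φ : G →* (∀ l : S, Gf l.1) := Pi.monoidHom (fun l : S => ρ l.1) with hφdef
    have hφ : Function.Surjective φ := IH
    set ψ : G →* Gf a := ρ a with hψdef
    have hχ : Function.Surjective (fun g => ((φ g, ψ g) : (∀ l : S, Gf l.1) × Gf a)) := by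
      by_contra hns
      have H2 := exists_common_quotient (A := ∀ l : S, Gf l.1) (B := Gf a) φ ψ hφ (hsurj a) hns
      obtain ⟨T, _, hTsimple, ⟨fA, hfA⟩, ⟨fB, hfB⟩⟩ := H2
      obtain ⟨l, hl⟩ := pi_simple_quotient fA hfA hTsimple
      have hne : l.1 ≠ a := fun h => ha (h ▸ l.2)
      exact hind l.1 a hne T
        (isFiniteSimpleQuotient_of_surjective _ hl hTsimple)
        (isFiniteSimpleQuotient_of_surjective fB hfB hTsimple)
    intro t
    obtain ⟨g, hg⟩ := hχ
      (fun l : S => t ⟨l.1, Finset.mem_insert_of_mem l.2⟩, t ⟨a, Finset.mem_insert_self a S⟩)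
    refine ⟨g, funext fun l => ?_⟩
    obtain ⟨x, hx⟩ := l
    rcases Finset.mem_insert.mp hx with h | h
    · subst h
      exact congrArg Prod.snd hg
    · exact congrFun (congrArg Prod.fst hg) ⟨x, h⟩
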